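/- arXiv:1404.5224 — 3 statements merged into one kernel-verified Lean document; each statement's English description precedes it below -/
import Mathlib

section
/- Let k ≥ 1 and let a, b be positive integers. For every n ≥ 0, the b-fold convolution power of the sequence (F^{a/b}_{k,m})_m in degree n equals the a-fold convolution power of the sequence of generalized Fibonacci polynomials (F_{k,m})_m in degree n; that is, Σ_{j₁+⋯+j_b = n} F^{a/b}_{k,j₁}⋯F^{a/b}_{k,j_b} = Σ_{i₁+⋯+i_a = n} F_{k,i₁}⋯F_{k,i_a} in ℚ[t₁,…,t_k]. In other words, F^{a/b} is a b-th convolution root of the a-th convolution power of the GFP sequence. -/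
open Finset MvPolynomial

/-- The set of partitions `α ⊢ n` with parts at most `k`, encoded as tuples
`α = (α₁, …, α_k) ∈ ℕ^k` (0-indexed) with `∑ j, (j+1)·α_j = n`. -/
def partitions (k n : ℕ) : Finset (Fin k → ℕ) :=
  (Fintype.piFinset fun _ : Fin k => Finset.range (n + 1)).filter
    fun α => ∑ j : Fin k, (j.1 + 1) * α j = n

/-- The variable `t_{m+1}` of `ℚ[t₁,…,t_k]` (0-indexed), with the convention
`t_j = 0` for `j > k`. -/
noncomputable def tQ (k m : ℕ) : MvPolynomial (Fin k) ℚ :=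
  if h : m < k then X ⟨m, h⟩ else 0

/-- The Stirling operator of the first kind: `B q m = q(q+1)⋯(q+m-1)`, i.e.
`B q m = B_{m-1}(q)` in the paper's notation, with `B q 0 = B_{-1}(q) = 1`. -/
def B (q : ℚ) (m : ℕ) : ℚ := ∏ i ∈ Finset.range m, (q + i)

/-- The `q`-th convolution root of the generalized Fibonacci polynomial:
`F^q_{k,n} = ∑_{α ⊢ n} (B_{|α|-1}(q) / (α₁!⋯α_k!)) · t^α`, with `F^q_{k,0} = 1`. -/
noncomputable def Fq (k : ℕ) (q : ℚ) (n : ℕ) : MvPolynomial (Fin k) ℚ :=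
  if n = 0 then 1 else
    ∑ α ∈ partitions k n,
      C (B q (∑ j, α j) / ∏ j, ((α j).factorial : ℚ)) * ∏ j, X j ^ α j

/-- The generalized Fibonacci polynomial
`F_{k,n} = ∑_{α ⊢ n} (|α|!/(α₁!⋯α_k!))·t^α` in `ℤ[t₁,…,t_k]`, with `F_{k,0} = 1`. -/
noncomputable def F (k n : ℕ) : MvPolynomial (Fin k) ℤ :=
  ∑ α ∈ partitions k n,
    (Nat.multinomial Finset.univ α : MvPolynomial (Fin k) ℤ) * ∏ j, X j ^ α j



lemma B_succ (q : ℚ) (m : ℕ) : B q (m+1) = B q m * (q + m) := Finset.prod_range_succ _ _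

lemma B_add (q : ℚ) (a m : ℕ) : B q (a + m) = B q a * B (q + a) m := by
  induction m with
  | zero => simp [B]
  | succ m ih =>
    rw [show a + (m+1) = (a+m)+1 from rfl, B_succ, ih, B_succ]
    push_cast
    ring

lemma B_vdm (q q' : ℚ) : ∀ M : ℕ,
    ∑ m ∈ Finset.range (M+1), (M.choose m : ℚ) * (B q m * B q' (M-m)) = B (q+q') M := by
  intro M
  induction M with
  | zero => simp [B]
  | succ M ih =>
    have key : ∀ m ∈ Finset.range (M+1),
        (M.choose m : ℚ) * (B q m * B q' (M - m)) * (q + q' + M)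
        = (M.choose m : ℚ) * (B q (m+1) * B q' (M-m))
          + (M.choose m : ℚ) * (B q m * B q' (M+1-m)) := by
      intro m hm
      rw [Finset.mem_range, Nat.lt_succ_iff] at hm
      have h2 : M + 1 - m = (M - m) + 1 := by omega
      rw [h2, B_succ, B_succ]
      have h1 : ((M - m : ℕ) : ℚ) = (M : ℚ) - m := by
        rw [Nat.cast_sub hm]
      rw [h1]
      ring
    have hR : B (q+q') (M+1)
        = (∑ m ∈ Finset.range (M+1), (M.choose m : ℚ) * (B q (m+1) * B q' (M-m)))
          + ∑ m ∈ Finset.range (M+1), (M.choose m : ℚ) * (B q m * B q' (M+1-m)) := by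
      rw [B_succ, ← ih, Finset.sum_mul, Finset.sum_congr rfl key, Finset.sum_add_distrib]
    rw [hR]
    -- now expand LHS
    rw [Finset.sum_range_succ' (fun m => ((M+1).choose m : ℚ) * (B q m * B q' (M+1-m)))]
    have hP : ∀ m, ((M+1).choose (m+1) : ℚ) = (M.choose m : ℚ) + (M.choose (m+1) : ℚ) := by
      intro m; rw [Nat.choose_succ_succ]; push_cast; ring
    have e1 : ∀ m ∈ Finset.range (M+1),
        ((M+1).choose (m+1) : ℚ) * (B q (m+1) * B q' (M+1-(m+1)))
        = (M.choose m : ℚ) * (B q (m+1) * B q' (M-m))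
          + (M.choose (m+1) : ℚ) * (B q (m+1) * B q' (M-m)) := by
      intro m hm
      have : M + 1 - (m+1) = M - m := by omega
      rw [this, hP]; ring
    rw [Finset.sum_congr rfl e1, Finset.sum_add_distrib]
    have e2 : (∑ m ∈ Finset.range (M+1), (M.choose (m+1) : ℚ) * (B q (m+1) * B q' (M-m)))
        + ((M+1).choose 0 : ℚ) * (B q 0 * B q' (M+1-0))
        = ∑ m ∈ Finset.range (M+1), (M.choose m : ℚ) * (B q m * B q' (M+1-m)) := by
      rw [Finset.sum_range_succ' (fun m => (M.choose m : ℚ) * (B q m * B q' (M+1-m)))]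
      congr 1
      · rw [Finset.sum_range_succ]
        simp only [Nat.choose_succ_self, Nat.cast_zero, zero_mul, add_zero]
        refine Finset.sum_congr rfl fun m hm => ?_
        rw [Finset.mem_range] at hm
        have : M + 1 - (m+1) = M - m := by omega
        rw [this]
      · simp [B]
    rw [add_assoc, e2]
lemma sum_piFinset_succ {M : Type*} [AddCommMonoid M] {k : ℕ} (s : Fin (k+1) → Finset ℕ)
    (f : (Fin (k+1) → ℕ) → M) :
    ∑ α ∈ Fintype.piFinset s, f α =
      ∑ x ∈ s 0, ∑ t ∈ Fintype.piFinset (fun i : Fin k => s i.succ), f (Fin.cons x t) := by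
  rw [← Finset.sum_product']
  refine Finset.sum_nbij' (fun α => (α 0, Fin.tail α)) (fun p => Fin.cons p.1 p.2)
    ?_ ?_ ?_ ?_ ?_
  · intro α hα
    rw [Fintype.mem_piFinset] at hα
    simp only [Finset.mem_product]
    exact ⟨hα 0, Fintype.mem_piFinset.mpr fun i => hα i.succ⟩
  · intro p hp
    rw [Finset.mem_product] at hp
    rw [Fintype.mem_piFinset]
    intro i
    refine Fin.cases ?_ ?_ i
    · simpa using hp.1
    · intro j; simpa using Fintype.mem_piFinset.mp hp.2 j
  · intro α _; exact Fin.cons_self_tail α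
  · intro p _; simp
  · intro α _; rw [Fin.cons_self_tail]

lemma K (k : ℕ) : ∀ (q q' : ℚ) (γ : Fin k → ℕ),
    ∑ α ∈ Fintype.piFinset (fun j => Finset.range (γ j + 1)),
      ((∏ j, ((γ j).choose (α j) : ℚ)) * (B q (∑ j, α j) * B q' (∑ j, γ j - ∑ j, α j)))
      = B (q + q') (∑ j, γ j) := by
  induction k with
  | zero => intro q q' γ; simp [B, Finset.univ_unique]
  | succ k ih =>
    intro q q' γ
    rw [sum_piFinset_succ]
    have main : ∀ x ∈ Finset.range (γ 0 + 1),
        (∑ t ∈ Fintype.piFinset (fun i : Fin k => Finset.range (γ i.succ + 1)),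
          ((∏ j, ((γ j).choose ((Fin.cons x t : Fin (k+1) → ℕ) j) : ℚ)) *
            (B q (∑ j, (Fin.cons x t : Fin (k+1) → ℕ) j) *
             B q' (∑ j, γ j - ∑ j, (Fin.cons x t : Fin (k+1) → ℕ) j))))
        = ((γ 0).choose x : ℚ) * (B q x * B q' (γ 0 - x))
            * B (q + q' + γ 0) (∑ j : Fin k, γ j.succ) := by
      intro x hx
      rw [Finset.mem_range, Nat.lt_succ_iff] at hx
      have step : ∀ t ∈ Fintype.piFinset (fun i : Fin k => Finset.range (γ i.succ + 1)),
          ((∏ j, ((γ j).choose ((Fin.cons x t : Fin (k+1) → ℕ) j) : ℚ)) *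
            (B q (∑ j, (Fin.cons x t : Fin (k+1) → ℕ) j) * B q' (∑ j, γ j - ∑ j, (Fin.cons x t : Fin (k+1) → ℕ) j)))
          = (((γ 0).choose x : ℚ) * (B q x * B q' (γ 0 - x))) *
            ((∏ j : Fin k, ((γ j.succ).choose (t j) : ℚ)) *
              (B (q + x) (∑ j, t j)
                * B (q' + ((γ 0 - x : ℕ) : ℚ)) (∑ j : Fin k, γ j.succ - ∑ j, t j))) := by
        intro t ht
        rw [Fintype.mem_piFinset] at ht
        have htle : ∀ j, t j ≤ γ j.succ := fun j => by
          have := ht j; rw [Finset.mem_range, Nat.lt_succ_iff] at this; exact this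
        have hT : ∑ j, t j ≤ ∑ j : Fin k, γ j.succ :=
          Finset.sum_le_sum fun j _ => htle j
        have hprod : (∏ j, ((γ j).choose ((Fin.cons x t : Fin (k+1) → ℕ) j) : ℚ))
            = ((γ 0).choose x : ℚ) * ∏ j : Fin k, ((γ j.succ).choose (t j) : ℚ) := by
          rw [Fin.prod_univ_succ]; simp
        have hsum : (∑ j, (Fin.cons x t : Fin (k+1) → ℕ) j) = x + ∑ j, t j := by
          rw [Fin.sum_univ_succ]; simp
        have hsumγ : (∑ j, γ j) = γ 0 + ∑ j : Fin k, γ j.succ := by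
          rw [Fin.sum_univ_succ]
        have hsub : (∑ j, γ j) - (x + ∑ j, t j)
            = (γ 0 - x) + ((∑ j : Fin k, γ j.succ) - ∑ j, t j) := by
          rw [hsumγ]; omega
        rw [hprod, hsum, hsub, B_add q x, B_add q' (γ 0 - x)]
        ring
      rw [Finset.sum_congr rfl step, ← Finset.mul_sum]
      have := ih (q + x) (q' + ((γ 0 - x : ℕ) : ℚ)) (fun j => γ j.succ)
      rw [this]
      have : (q + x) + (q' + ((γ 0 - x : ℕ) : ℚ)) = q + q' + (γ 0 : ℚ) := by
        rw [Nat.cast_sub hx]; ring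
      rw [this]
    rw [Finset.sum_congr rfl main]
    have : (∑ j, γ j) = γ 0 + ∑ j : Fin k, γ j.succ := by rw [Fin.sum_univ_succ]
    rw [this, B_add, ← B_vdm q q' (γ 0), Finset.sum_mul]
lemma prod_factorial_ne_zero {k : ℕ} (δ : Fin k → ℕ) :
    (∏ j, ((δ j).factorial : ℚ)) ≠ 0 := by
  positivity

lemma K' (k : ℕ) (q q' : ℚ) (γ : Fin k → ℕ) :
    ∑ α ∈ Fintype.piFinset (fun j => Finset.range (γ j + 1)),
      ((B q (∑ j, α j) / ∏ j, ((α j).factorial : ℚ)) *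
        (B q' (∑ j, (γ j - α j)) / ∏ j, (((γ j - α j)).factorial : ℚ)))
      = B (q + q') (∑ j, γ j) / ∏ j, ((γ j).factorial : ℚ) := by
  rw [← K k q q' γ, Finset.sum_div]
  refine Finset.sum_congr rfl fun α hα => ?_
  rw [Fintype.mem_piFinset] at hα
  have hle : ∀ j, α j ≤ γ j := fun j => by
    have := hα j; rw [Finset.mem_range, Nat.lt_succ_iff] at this; exact this
  have h1 : ∑ j, (γ j - α j) = ∑ j, γ j - ∑ j, α j :=
    Finset.sum_tsub_distrib _ fun j _ => hle j
  have h2 : (∏ j, ((γ j).choose (α j) : ℚ))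
      = (∏ j, ((γ j).factorial : ℚ)) /
        ((∏ j, ((α j).factorial : ℚ)) * ∏ j, (((γ j - α j)).factorial : ℚ)) := by
    rw [← Finset.prod_mul_distrib, ← Finset.prod_div_distrib]
    exact Finset.prod_congr rfl fun j _ => Nat.cast_choose ℚ (hle j)
  rw [h1, h2]
  have hγ := prod_factorial_ne_zero γ
  have hα' := prod_factorial_ne_zero α
  have hd := prod_factorial_ne_zero (fun j => γ j - α j)
  field_simp

def wt {k : ℕ} (α : Fin k → ℕ) : ℕ := ∑ j, (j.1 + 1) * α j

lemma wt_add {k : ℕ} (α β : Fin k → ℕ) : wt (α + β) = wt α + wt β := by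
  simp [wt, mul_add, Finset.sum_add_distrib]

lemma wt_sub_add {k : ℕ} {α β : Fin k → ℕ} (h : ∀ j, α j ≤ β j) :
    wt α + wt (β - α) = wt β := by
  unfold wt
  rw [← Finset.sum_add_distrib]
  refine Finset.sum_congr rfl fun j _ => ?_
  have := h j
  simp only [Pi.sub_apply]
  rw [← Nat.left_distrib]
  congr 1
  omega

lemma mem_partitions {k n : ℕ} {α : Fin k → ℕ} : α ∈ partitions k n ↔ wt α = n := by
  constructor
  · intro h; exact (Finset.mem_filter.mp h).2
  · intro h
    refine Finset.mem_filter.mpr ⟨Fintype.mem_piFinset.mpr fun j => ?_, h⟩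
    rw [Finset.mem_range, Nat.lt_succ_iff, ← h]
    calc α j ≤ (j.1 + 1) * α j := by nlinarith [Nat.zero_le (α j)]
      _ ≤ wt α := Finset.single_le_sum (f := fun j : Fin k => (j.1+1) * α j)
          (fun _ _ => Nat.zero_le _) (Finset.mem_univ j)

lemma partitions_zero (k : ℕ) : partitions k 0 = {0} := by
  ext α
  rw [mem_partitions, Finset.mem_singleton]
  constructor
  · intro h
    funext j
    have := (Finset.sum_eq_zero_iff.mp h) j (Finset.mem_univ j)
    simpa using this
  · rintro rfl; simp [wt]

lemma B_zero (q : ℚ) : B q 0 = 1 := by simp [B]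

lemma Fq_eq (k : ℕ) (q : ℚ) (n : ℕ) :
    Fq k q n = ∑ α ∈ partitions k n,
      C (B q (∑ j, α j) / ∏ j, ((α j).factorial : ℚ)) * ∏ j, X j ^ α j := by
  unfold Fq
  split_ifs with h
  · subst h
    rw [partitions_zero, Finset.sum_singleton]
    simp [B_zero]
  · rfl

lemma conv_coeff (k : ℕ) (q q' : ℚ) (γ : Fin k → ℕ) :
    (C (B (q+q') (∑ j, γ j) / ∏ j, ((γ j).factorial : ℚ)) * ∏ j, X j ^ γ j
      : MvPolynomial (Fin k) ℚ)
    = ∑ α ∈ Fintype.piFinset (fun j => Finset.range (γ j + 1)),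
        ((C (B q (∑ j, α j) / ∏ j, ((α j).factorial : ℚ)) * ∏ j, X j ^ α j) *
         (C (B q' (∑ j, (γ - α) j) / ∏ j, (((γ - α) j).factorial : ℚ)) *
            ∏ j, X j ^ ((γ - α) j))) := by
  rw [← K' k q q' γ, map_sum, Finset.sum_mul]
  refine Finset.sum_congr rfl fun α hα => ?_
  rw [Fintype.mem_piFinset] at hα
  have hle : ∀ j, α j ≤ γ j := fun j => by
    have := hα j; rw [Finset.mem_range, Nat.lt_succ_iff] at this; exact this
  have hX : (∏ j, X j ^ γ j : MvPolynomial (Fin k) ℚ)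
      = (∏ j, X j ^ α j) * ∏ j, X j ^ (γ j - α j) := by
    rw [← Finset.prod_mul_distrib]
    refine Finset.prod_congr rfl fun j _ => ?_
    rw [← pow_add]
    congr 1
    have := hle j
    omega
  simp only [Pi.sub_apply]
  rw [map_mul, hX]
  ring

lemma conv (k : ℕ) (q q' : ℚ) (n : ℕ) :
    ∑ p ∈ Finset.HasAntidiagonal.antidiagonal n, Fq k q p.1 * Fq k q' p.2 = Fq k (q+q') n := by
  conv_rhs => rw [Fq_eq]
  rw [Finset.sum_congr rfl (fun γ _ => conv_coeff k q q' γ), Finset.sum_sigma']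
  have hL : ∀ p ∈ Finset.HasAntidiagonal.antidiagonal n, Fq k q p.1 * Fq k q' p.2
      = ∑ x ∈ (partitions k p.1) ×ˢ (partitions k p.2),
          ((C (B q (∑ j, x.1 j) / ∏ j, ((x.1 j).factorial : ℚ)) * ∏ j, X j ^ x.1 j) *
           (C (B q' (∑ j, x.2 j) / ∏ j, ((x.2 j).factorial : ℚ)) * ∏ j, X j ^ x.2 j)) := by
    intro p _
    rw [Fq_eq, Fq_eq, Finset.sum_mul_sum, ← Finset.sum_product']
  rw [Finset.sum_congr rfl hL, Finset.sum_sigma']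
  refine Finset.sum_nbij' (fun x => ⟨x.2.1 + x.2.2, x.2.1⟩)
    (fun y => ⟨(wt y.2, wt (y.1 - y.2)), (y.2, y.1 - y.2)⟩) ?_ ?_ ?_ ?_ ?_
  · rintro ⟨p, α, β⟩ hx
    rw [Finset.mem_sigma, Finset.mem_product] at hx
    obtain ⟨hp, hα, hβ⟩ := hx
    rw [Finset.HasAntidiagonal.mem_antidiagonal] at hp
    refine Finset.mem_sigma.mpr ⟨mem_partitions.mpr ?_, Fintype.mem_piFinset.mpr fun j => ?_⟩
    · rw [wt_add, mem_partitions.mp hα, mem_partitions.mp hβ, hp]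
    · simp only [Pi.add_apply, Finset.mem_range]
      omega
  · rintro ⟨γ, α⟩ hy
    rw [Finset.mem_sigma] at hy
    obtain ⟨hγ, hα⟩ := hy
    rw [Fintype.mem_piFinset] at hα
    have hle : ∀ j, α j ≤ γ j := fun j => by
      have := hα j; rw [Finset.mem_range, Nat.lt_succ_iff] at this; exact this
    refine Finset.mem_sigma.mpr ⟨?_, Finset.mem_product.mpr ⟨?_, ?_⟩⟩
    · rw [Finset.HasAntidiagonal.mem_antidiagonal, wt_sub_add hle, mem_partitions.mp hγ]
    · exact mem_partitions.mpr rfl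
    · exact mem_partitions.mpr rfl
  · rintro ⟨p, α, β⟩ hx
    rw [Finset.mem_sigma, Finset.mem_product] at hx
    obtain ⟨hp, hα, hβ⟩ := hx
    have hβ' : α + β - α = β := by funext j; simp
    dsimp only
    rw [hβ', mem_partitions.mp hα, mem_partitions.mp hβ]
  · rintro ⟨γ, α⟩ hy
    rw [Finset.mem_sigma] at hy
    obtain ⟨hγ, hα⟩ := hy
    rw [Fintype.mem_piFinset] at hα
    have hle : ∀ j, α j ≤ γ j := fun j => by
      have := hα j; rw [Finset.mem_range, Nat.lt_succ_iff] at this; exact this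
    have hγ' : α + (γ - α) = γ := by
      funext j
      have := hle j
      simp only [Pi.add_apply, Pi.sub_apply]
      omega
    dsimp only
    rw [hγ']
  · rintro ⟨p, α, β⟩ hx
    have hβ' : α + β - α = β := by funext j; simp
    dsimp only
    rw [hβ']
lemma B_zero_left {m : ℕ} (hm : m ≠ 0) : B 0 m = 0 := by
  apply Finset.prod_eq_zero (i := 0)
  · exact Finset.mem_range.mpr (Nat.pos_of_ne_zero hm)
  · simp

lemma Fq_zero (k n : ℕ) : Fq k 0 n = if n = 0 then 1 else 0 := by
  split_ifs with h
  · subst h; rfl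
  · rw [Fq_eq]
    refine Finset.sum_eq_zero fun α hα => ?_
    have hne : (∑ j, α j) ≠ 0 := by
      intro h0
      have : ∀ j ∈ Finset.univ, α j = 0 := Finset.sum_eq_zero_iff.mp h0
      have : wt α = 0 := Finset.sum_eq_zero fun j _ => by rw [this j (Finset.mem_univ j)]; ring
      exact h (by rw [← mem_partitions.mp hα, this])
    rw [B_zero_left hne]
    simp

lemma powQ {ι : Type*} [DecidableEq ι] (k : ℕ) (q : ℚ) (s : Finset ι) :
    ∀ n : ℕ, ∑ l ∈ s.piAntidiag n, ∏ i ∈ s, Fq k q (l i) = Fq k ((s.card : ℚ) * q) n := by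
  induction s using Finset.cons_induction with
  | empty =>
    intro n
    rw [Finset.piAntidiag_empty]
    split_ifs with h
    · subst h; simp [Fq_zero]
    · simp [Fq_zero, h]
  | cons a s hi ih =>
    intro n
    rw [Finset.piAntidiag_cons hi, Finset.sum_disjiUnion]
    have hmain : ∀ p ∈ Finset.HasAntidiagonal.antidiagonal n,
        (∑ l ∈ (s.piAntidiag p.2).map
            (addRightEmbedding fun t => if t = a then p.1 else 0),
          ∏ i ∈ Finset.cons a s hi, Fq k q (l i))
        = Fq k q p.1 * Fq k ((s.card : ℚ) * q) p.2 := by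
      intro p _
      rw [Finset.sum_map]
      have hterm : ∀ g ∈ s.piAntidiag p.2,
          (∏ i ∈ Finset.cons a s hi,
            Fq k q ((addRightEmbedding fun t => if t = a then p.1 else 0) g i))
          = Fq k q p.1 * ∏ i ∈ s, Fq k q (g i) := by
        intro g hg
        have hga : g a = 0 := by
          rw [Finset.mem_piAntidiag] at hg
          by_contra h
          exact hi (hg.2 a h)
        rw [Finset.prod_cons]
        congr 1
        · simp [addRightEmbedding_apply, hga]
        · refine Finset.prod_congr rfl fun i his => ?_
          have : i ≠ a := fun h => hi (h ▸ his)
          simp [addRightEmbedding_apply, this]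
      rw [Finset.sum_congr rfl hterm, ← Finset.mul_sum, ih]
    rw [Finset.sum_congr rfl hmain, conv]
    congr 1
    rw [Finset.card_cons]
    push_cast
    ring

lemma B_one (m : ℕ) : B 1 m = m.factorial := by
  induction m with
  | zero => simp [B]
  | succ m ih =>
    rw [B, Finset.prod_range_succ, ← B, ih, Nat.factorial_succ]
    push_cast
    ring

lemma mapF (k m : ℕ) : MvPolynomial.map (Int.castRingHom ℚ) (F k m) = Fq k 1 m := by
  rw [Fq_eq, F, map_sum]
  refine Finset.sum_congr rfl fun α hα => ?_
  rw [map_mul]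
  congr 1
  · rw [map_natCast]
    have spec := Nat.multinomial_spec Finset.univ α
    have hcast : ((∏ i, (α i).factorial : ℕ) : ℚ) * (Nat.multinomial Finset.univ α : ℚ)
        = ((∑ i, α i).factorial : ℚ) := by exact_mod_cast congrArg (Nat.cast (R := ℚ)) spec
    push_cast at hcast
    have hne : (∏ j, ((α j).factorial : ℚ)) ≠ 0 := by positivity
    rw [show ((Nat.multinomial Finset.univ α : ℕ) : MvPolynomial (Fin k) ℚ)
        = C ((Nat.multinomial Finset.univ α : ℕ) : ℚ) by push_cast; rfl]
    congr 1
    rw [B_one]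
    field_simp
    linarith [hcast]
  · rw [map_prod]
    refine Finset.prod_congr rfl fun j _ => ?_
    rw [map_pow, MvPolynomial.map_X]

theorem Fq_rat_root (k : ℕ) (hk : 1 ≤ k) (a b : ℕ) (ha : 1 ≤ a) (hb : 1 ≤ b) (n : ℕ) :
    ∑ j ∈ Finset.Nat.antidiagonalTuple b n, ∏ i, Fq k ((a : ℚ) / (b : ℚ)) (j i) =
      ∑ j ∈ Finset.Nat.antidiagonalTuple a n,
        ∏ i, MvPolynomial.map (Int.castRingHom ℚ) (F k (j i)) := by
  have hb0 : (b : ℚ) ≠ 0 := by positivity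
  calc ∑ j ∈ Finset.Nat.antidiagonalTuple b n, ∏ i, Fq k ((a : ℚ) / (b : ℚ)) (j i)
      = ∑ l ∈ (Finset.univ : Finset (Fin b)).piAntidiag n,
          ∏ i ∈ Finset.univ, Fq k ((a : ℚ) / (b : ℚ)) (l i) := by
        rw [Finset.piAntidiag_univ_fin_eq_antidiagonalTuple]
    _ = Fq k (((Finset.univ : Finset (Fin b)).card : ℚ) * ((a : ℚ) / (b : ℚ))) n := powQ k _ _ n
    _ = Fq k a n := by
        rw [Finset.card_univ, Fintype.card_fin]
        congr 1
        field_simp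
    _ = Fq k (((Finset.univ : Finset (Fin a)).card : ℚ) * 1) n := by
        rw [Finset.card_univ, Fintype.card_fin, mul_one]
    _ = ∑ l ∈ (Finset.univ : Finset (Fin a)).piAntidiag n, ∏ i ∈ Finset.univ, Fq k 1 (l i) :=
        (powQ k 1 _ n).symm
    _ = ∑ j ∈ Finset.Nat.antidiagonalTuple a n,
          ∏ i, MvPolynomial.map (Int.castRingHom ℚ) (F k (j i)) := by
        rw [Finset.piAntidiag_univ_fin_eq_antidiagonalTuple]
        exact Finset.sum_congr rfl fun l _ => Finset.prod_congr rfl fun i _ => (mapF k (l i)).symm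
end

section
/- Let k ≥ 1 and n ≥ 1. Substituting t_j = (−1)^{j−1}·e_j(x₁,…,x_k) (where e_j is the j-th elementary symmetric polynomial in variables x₁,…,x_k) into the generalized Lucas polynomial G_{k,n}(t₁,…,t_k) yields the power sum symmetric polynomial p_n(x₁,…,x_k) = x₁ⁿ + ⋯ + x_kⁿ. That is, the GLPs are the power sum symmetric polynomials written on the elementary symmetric polynomial basis. -/
open Finset MvPolynomial

/-- The generalized Lucas polynomial
`G_{k,n} = ∑_{α ⊢ n} (|α|!/(α₁!⋯α_k!))·(n/|α|)·t^α` for `n ≥ 1`, and `G_{k,0} = k`.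
Its coefficients are integers; it is written here in `ℚ[t₁,…,t_k]`. -/
noncomputable def G (k n : ℕ) : MvPolynomial (Fin k) ℚ :=
  if n = 0 then (k : MvPolynomial (Fin k) ℚ)
  else
    ∑ α ∈ partitions k n,
      C ((Nat.multinomial Finset.univ α : ℚ) * ((n : ℚ) / ((∑ i, α i : ℕ) : ℚ))) *
        ∏ j, X j ^ α j
namespace GLP

variable {k : ℕ}

noncomputable def F (k m : ℕ) : MvPolynomial (Fin k) ℚ :=
  ∑ α ∈ partitions k m, C ((Nat.multinomial Finset.univ α : ℚ)) * ∏ j, X j ^ α j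

def addS (j : Fin k) (β : Fin k → ℕ) : Fin k → ℕ := fun i => β i + (if i = j then 1 else 0)
def subS (j : Fin k) (α : Fin k → ℕ) : Fin k → ℕ := fun i => α i - (if i = j then 1 else 0)

lemma mem_partitions {n : ℕ} {α : Fin k → ℕ} :
    α ∈ partitions k n ↔ ∑ j : Fin k, (j.1 + 1) * α j = n := by
  classical
  constructor
  · intro h; exact (Finset.mem_filter.mp h).2
  · intro h
    refine Finset.mem_filter.mpr ⟨?_, h⟩
    refine Fintype.mem_piFinset.mpr fun j => ?_
    rw [Finset.mem_range]
    have h1 : α j ≤ (j.1 + 1) * α j := Nat.le_mul_of_pos_left _ (Nat.succ_pos _)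
    have h2 : (j.1 + 1) * α j ≤ n := h ▸ Finset.single_le_sum
      (f := fun i : Fin k => (i.1 + 1) * α i) (fun i _ => Nat.zero_le _) (Finset.mem_univ j)
    omega

lemma le_of_mem_partitions {n : ℕ} {α : Fin k → ℕ} (h : α ∈ partitions k n) {j : Fin k}
    (hj : α j ≠ 0) : j.1 + 1 ≤ n := by
  have h2 : (j.1 + 1) * α j ≤ n := (mem_partitions.mp h) ▸ Finset.single_le_sum
    (f := fun i : Fin k => (i.1 + 1) * α i) (fun i _ => Nat.zero_le _) (Finset.mem_univ j)
  have : j.1 + 1 ≤ (j.1 + 1) * α j := Nat.le_mul_of_pos_right _ (Nat.pos_of_ne_zero hj)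
  omega

lemma sum_ne_zero_of_mem_partitions {n : ℕ} {α : Fin k → ℕ} (h : α ∈ partitions k n)
    (hn : 1 ≤ n) : (∑ i, α i) ≠ 0 := by
  intro h0
  have hall : ∀ i, α i = 0 := fun i => Finset.sum_eq_zero_iff.mp h0 i (Finset.mem_univ i)
  have hw := mem_partitions.mp h
  rw [Finset.sum_eq_zero (fun i _ => by rw [hall i, Nat.mul_zero])] at hw
  omega

lemma sum_addS (j : Fin k) (β : Fin k → ℕ) : ∑ i, addS j β i = (∑ i, β i) + 1 := by
  simp only [addS, Finset.sum_add_distrib]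
  congr 1
  simp [Finset.sum_ite_eq' Finset.univ j (fun _ => 1)]

lemma wt_addS (j : Fin k) (β : Fin k → ℕ) :
    ∑ i : Fin k, (i.1 + 1) * addS j β i = (∑ i : Fin k, (i.1 + 1) * β i) + (j.1 + 1) := by
  simp only [addS, Nat.mul_add, Finset.sum_add_distrib]
  congr 1
  rw [Finset.sum_congr rfl (fun i _ => by rw [mul_ite, Nat.mul_one, Nat.mul_zero])]
  simp [Finset.sum_ite_eq' Finset.univ j (fun i : Fin k => i.1 + 1)]

lemma subS_addS (j : Fin k) (β : Fin k → ℕ) : subS j (addS j β) = β := by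
  funext i; simp only [subS, addS]; split <;> omega

lemma addS_subS {j : Fin k} {α : Fin k → ℕ} (h : α j ≠ 0) : addS j (subS j α) = α := by
  funext i; simp only [subS, addS]
  by_cases hi : i = j
  · subst hi; simp; omega
  · simp [hi]

lemma prod_X_addS (j : Fin k) (β : Fin k → ℕ) :
    (∏ i, (X i : MvPolynomial (Fin k) ℚ) ^ addS j β i) = X j * ∏ i, X i ^ β i := by
  simp only [addS, pow_add, Finset.prod_mul_distrib]
  rw [mul_comm]
  congr 1
  rw [Finset.prod_eq_single j (fun i _ hi => by rw [if_neg hi, pow_zero])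
    (fun h => absurd (Finset.mem_univ j) h)]
  simp

noncomputable def M (α : Fin k → ℕ) : ℚ := (Nat.multinomial Finset.univ α : ℚ)

lemma M_cast (α : Fin k → ℕ) :
    M α = ((∑ i, α i).factorial : ℚ) / (∏ i, ((α i).factorial : ℚ)) := by
  rw [M, eq_div_iff (by positivity), mul_comm, ← Nat.cast_prod, ← Nat.cast_mul,
    Nat.multinomial_spec]

lemma M_succ (β : Fin k → ℕ) (j : Fin k) :
    ((∑ i, β i : ℕ) + 1 : ℚ) * M β = ((β j + 1 : ℕ) : ℚ) * M (addS j β) := by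
  classical
  have hprod : ∏ i, (((addS j β) i).factorial : ℚ)
      = ((β j + 1 : ℕ) : ℚ) * ∏ i, ((β i).factorial : ℚ) := by
    rw [← Finset.mul_prod_erase Finset.univ (fun i => (((addS j β) i).factorial : ℚ))
      (Finset.mem_univ j),
      ← Finset.mul_prod_erase Finset.univ (fun i => (((β) i).factorial : ℚ))
      (Finset.mem_univ j)]
    have he : ∀ i ∈ Finset.univ.erase j, (((addS j β) i).factorial : ℚ)
        = ((β i).factorial : ℚ) := by
      intro i hi
      rw [addS, if_neg (Finset.mem_erase.mp hi).1, Nat.add_zero]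
    rw [Finset.prod_congr rfl he]
    have : addS j β j = β j + 1 := by simp [addS]
    rw [this, Nat.factorial_succ, Nat.cast_mul, mul_assoc]
  rw [M_cast, M_cast, sum_addS, hprod, Nat.factorial_succ (∑ i, β i), Nat.cast_mul]
  have h1 : (∏ i, ((β i).factorial : ℚ)) ≠ 0 := by positivity
  have h2 : ((β j + 1 : ℕ) : ℚ) ≠ 0 := by positivity
  push_cast
  field_simp

lemma M_sub {α : Fin k → ℕ} {j : Fin k} (h : α j ≠ 0) :
    ((∑ i, α i : ℕ) : ℚ) * M (subS j α) = ((α j : ℕ) : ℚ) * M α := by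
  have key := M_succ (subS j α) j
  rw [addS_subS h] at key
  have h1 : ∑ i, subS j α i + 1 = ∑ i, α i := by
    conv_rhs => rw [← addS_subS h, sum_addS]
  have h2 : subS j α j + 1 = α j := by simp [subS]; omega
  rw [← h1, ← h2]
  push_cast at key ⊢
  linarith [key]

lemma KEY {n : ℕ} (hn : 1 ≤ n) {α : Fin k → ℕ} (hα : α ∈ partitions k n) (w : Fin k → ℚ) :
    ∑ j ∈ Finset.univ.filter (fun j => α j ≠ 0), w j * M (subS j α)
      = (∑ j, w j * (α j : ℚ)) * M α / ((∑ i, α i : ℕ) : ℚ) := by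
  have hs : ((∑ i, α i : ℕ) : ℚ) ≠ 0 :=
    Nat.cast_ne_zero.mpr (sum_ne_zero_of_mem_partitions hα hn)
  rw [eq_div_iff hs, Finset.sum_mul]
  have hterm : ∀ j ∈ Finset.univ.filter (fun j => α j ≠ 0),
      w j * M (subS j α) * ((∑ i, α i : ℕ) : ℚ) = w j * (α j : ℚ) * M α := by
    intro j hj
    have := M_sub (Finset.mem_filter.mp hj).2
    linear_combination (w j) * this
  rw [Finset.sum_congr rfl hterm, Finset.sum_filter, Finset.sum_mul]
  apply Finset.sum_congr rfl
  intro j _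
  by_cases hj : α j = 0
  · simp [hj]
  · simp [hj, mul_assoc]


lemma SWAP {n : ℕ} (hn : 1 ≤ n) (w : Fin k → ℚ) :
    ∑ α ∈ partitions k n,
        C (∑ j ∈ Finset.univ.filter (fun j => α j ≠ 0), w j * M (subS j α)) * ∏ i, X i ^ α i
      = ∑ j : Fin k, if j.1 + 1 ≤ n then C (w j) * (X j * F k (n - (j.1 + 1))) else 0 := by
  classical
  have lhs_eq : ∀ α ∈ partitions k n,
      C (∑ j ∈ Finset.univ.filter (fun j => α j ≠ 0), w j * M (subS j α)) * ∏ i, X i ^ α i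
        = ∑ j : Fin k, (if α j ≠ 0 then C (w j * M (subS j α)) * ∏ i, X i ^ α i else 0) := by
    intro α _
    rw [map_sum, Finset.sum_mul, ← Finset.sum_filter]
  rw [Finset.sum_congr rfl lhs_eq, Finset.sum_comm]
  apply Finset.sum_congr rfl
  intro j _
  rw [← Finset.sum_filter]
  by_cases hj : j.1 + 1 ≤ n
  · rw [if_pos hj, F, Finset.mul_sum, Finset.mul_sum]
    refine Finset.sum_nbij' (subS j) (addS j) ?_ ?_ ?_ ?_ ?_
    · intro α hα
      rw [Finset.mem_filter] at hα
      rw [mem_partitions]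
      have h1 : ∑ i : Fin k, (i.1+1) * addS j (subS j α) i
          = (∑ i : Fin k, (i.1+1) * subS j α i) + (j.1+1) := wt_addS j (subS j α)
      rw [addS_subS hα.2] at h1
      have h2 := mem_partitions.mp hα.1
      omega
    · intro β hβ
      rw [Finset.mem_filter, mem_partitions, wt_addS]
      have h2 := mem_partitions.mp hβ
      refine ⟨by omega, by simp [addS]⟩
    · intro α hα
      exact addS_subS (Finset.mem_filter.mp hα).2
    · intro β _
      exact subS_addS j β
    · intro α hα
      have hprod : (∏ i, (X i : MvPolynomial (Fin k) ℚ) ^ α i)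
          = X j * ∏ i, X i ^ subS j α i := by
        conv_lhs => rw [← addS_subS (Finset.mem_filter.mp hα).2]
        rw [prod_X_addS]
      rw [map_mul, hprod, M]
      ring
  · rw [if_neg hj]
    apply Finset.sum_eq_zero
    intro α hα
    rw [Finset.mem_filter] at hα
    exact absurd (le_of_mem_partitions hα.1 hα.2) hj

lemma Frec {n : ℕ} (hn : 1 ≤ n) :
    F k n = ∑ j : Fin k, if j.1 + 1 ≤ n then X j * F k (n - (j.1 + 1)) else 0 := by
  have step : F k n = ∑ α ∈ partitions k n,
      C (∑ j ∈ Finset.univ.filter (fun j => α j ≠ 0), (1 : ℚ) * M (subS j α)) *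
        ∏ i, X i ^ α i := by
    rw [F]
    apply Finset.sum_congr rfl
    intro α hα
    have hs : ((∑ i, α i : ℕ) : ℚ) ≠ 0 :=
      Nat.cast_ne_zero.mpr (sum_ne_zero_of_mem_partitions hα hn)
    have hcoef : ∑ j ∈ Finset.univ.filter (fun j => α j ≠ 0), (1:ℚ) * M (subS j α) = M α := by
      rw [KEY hn hα (fun _ => 1)]
      have hsum : ∑ j : Fin k, (1:ℚ) * ((α j : ℕ) : ℚ) = ((∑ i, α i : ℕ) : ℚ) := by
        push_cast; simp
      rw [hsum, mul_comm, mul_div_assoc, div_self hs, mul_one]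
    rw [hcoef, M]
  rw [step, SWAP hn]
  apply Finset.sum_congr rfl
  intro j _
  split <;> simp

lemma Grec {n : ℕ} (hn : 1 ≤ n) :
    G k n = ∑ j : Fin k,
      if j.1 + 1 ≤ n then C ((j.1 + 1 : ℕ) : ℚ) * (X j * F k (n - (j.1 + 1))) else 0 := by
  have step : G k n = ∑ α ∈ partitions k n,
      C (∑ j ∈ Finset.univ.filter (fun j => α j ≠ 0),
        ((j.1 + 1 : ℕ) : ℚ) * M (subS j α)) * ∏ i, X i ^ α i := by
    rw [G, if_neg (by omega)]
    apply Finset.sum_congr rfl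
    intro α hα
    have hs : ((∑ i, α i : ℕ) : ℚ) ≠ 0 :=
      Nat.cast_ne_zero.mpr (sum_ne_zero_of_mem_partitions hα hn)
    have hw : ∑ j : Fin k, ((j.1 + 1 : ℕ) : ℚ) * ((α j : ℕ) : ℚ) = (n : ℚ) := by
      rw [← mem_partitions.mp hα]
      push_cast
      exact Finset.sum_congr rfl fun x _ => by ring
    have hcoef : ∑ j ∈ Finset.univ.filter (fun j => α j ≠ 0),
        ((j.1 + 1 : ℕ) : ℚ) * M (subS j α)
          = (Nat.multinomial Finset.univ α : ℚ) * ((n : ℚ) / ((∑ i, α i : ℕ) : ℚ)) := by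
      rw [KEY hn hα (fun j => ((j.1 + 1 : ℕ) : ℚ)), hw, M]
      field_simp
    rw [hcoef]
  rw [step, SWAP hn]


lemma esymm_gt (k a : ℕ) (ha : k < a) : esymm (Fin k) ℚ a = 0 := by
  rw [esymm, Finset.powersetCard_eq_empty.mpr (by simpa using ha), Finset.sum_empty]

lemma fin_sum_to_range {Mo : Type*} [AddCommMonoid Mo] (k n : ℕ) (c : ℕ → Mo)
    (hc : ∀ a, k < a → c a = 0) :
    (∑ j : Fin k, if j.1 + 1 ≤ n then c (j.1 + 1) else 0) = ∑ i ∈ Finset.range n, c (i + 1) := by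
  rw [Fin.sum_univ_eq_sum_range (fun j => if j + 1 ≤ n then c (j + 1) else 0) k]
  have h1 : (∑ j ∈ Finset.range k, if j + 1 ≤ n then c (j + 1) else 0)
      = ∑ j ∈ Finset.range (max k n), if j + 1 ≤ n then c (j + 1) else 0 := by
    apply Finset.sum_subset (Finset.range_subset_range.mpr (le_max_left k n))
    intro x _ hx
    rw [Finset.mem_range, not_lt] at hx
    rcases le_or_gt (x + 1) n with h | h
    · rw [if_pos h, hc _ (by omega)]
    · rw [if_neg (by omega)]
  have h2 : (∑ i ∈ Finset.range n, c (i + 1))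
      = ∑ j ∈ Finset.range (max k n), if j + 1 ≤ n then c (j + 1) else 0 := by
    rw [Finset.sum_congr rfl (fun i hi => (if_pos (Finset.mem_range.mp hi)).symm)]
    apply Finset.sum_subset (Finset.range_subset_range.mpr (le_max_right k n))
    intro x _ hx
    rw [Finset.mem_range, not_lt] at hx
    rw [if_neg (by omega)]
  rw [h1, h2]

noncomputable def φ (k : ℕ) : MvPolynomial (Fin k) ℚ →ₐ[ℚ] MvPolynomial (Fin k) ℚ :=
  aeval (fun j : Fin k => (-1 : MvPolynomial (Fin k) ℚ) ^ j.1 * esymm (Fin k) ℚ (j.1 + 1))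

noncomputable def h (k m : ℕ) : MvPolynomial (Fin k) ℚ := φ k (F k m)

lemma phi_X (j : Fin k) :
    φ k (X j) = (-1 : MvPolynomial (Fin k) ℚ) ^ j.1 * esymm (Fin k) ℚ (j.1 + 1) :=
  aeval_X _ j

lemma phi_C (a : ℚ) : φ k (C a) = C a := by
  rw [φ, aeval_C, algebraMap_eq]

lemma partitions_zero : partitions k 0 = {fun _ => 0} := by
  ext α
  rw [mem_partitions, Finset.mem_singleton]
  constructor
  · intro hα
    funext i
    have h1 := Finset.sum_eq_zero_iff.mp hα i (Finset.mem_univ i)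
    rcases Nat.mul_eq_zero.mp h1 with h | h
    · omega
    · exact h
  · intro hα; subst hα; simp

lemma F_zero : F k 0 = 1 := by
  rw [F, partitions_zero, Finset.sum_singleton]
  have : Nat.multinomial Finset.univ (fun _ : Fin k => 0) = 1 := by
    have := Nat.multinomial_spec Finset.univ (fun _ : Fin k => 0)
    simpa using this
  simp [this]

lemma h_zero : h k 0 = 1 := by rw [h, F_zero, map_one]

lemma neg_one_sq_pow (j : ℕ) :
    ((-1 : MvPolynomial (Fin k) ℚ)) ^ (j + 1 + 1) = (-1) ^ j := by
  rw [pow_succ, pow_succ]; ring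

lemma h_rec (k m : ℕ) (hm : 1 ≤ m) :
    h k m = ∑ j : Fin k, if j.1 + 1 ≤ m then
      (-1 : MvPolynomial (Fin k) ℚ) ^ (j.1 + 1 + 1) * esymm (Fin k) ℚ (j.1 + 1) *
        h k (m - (j.1 + 1)) else 0 := by
  rw [h, Frec hm, map_sum]
  apply Finset.sum_congr rfl
  intro j _
  rw [apply_ite (φ k), map_zero, map_mul, phi_X, neg_one_sq_pow, ← h]

lemma G_image (k n : ℕ) (hn : 1 ≤ n) :
    φ k (G k n) = ∑ j : Fin k, if j.1 + 1 ≤ n then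
      ((j.1 + 1 : ℕ) : MvPolynomial (Fin k) ℚ) *
        ((-1 : MvPolynomial (Fin k) ℚ) ^ (j.1 + 1 + 1) * esymm (Fin k) ℚ (j.1 + 1) *
          h k (n - (j.1 + 1))) else 0 := by
  rw [Grec hn, map_sum]
  apply Finset.sum_congr rfl
  intro j _
  rw [apply_ite (φ k), map_zero, map_mul, map_mul, phi_X, phi_C, map_natCast, neg_one_sq_pow,
    ← h]

noncomputable def Eser (k : ℕ) : PowerSeries (MvPolynomial (Fin k) ℚ) :=
  PowerSeries.mk fun i => (-1) ^ i * esymm (Fin k) ℚ i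

noncomputable def Hser (k : ℕ) : PowerSeries (MvPolynomial (Fin k) ℚ) :=
  PowerSeries.mk (h k)

noncomputable def Pser (k : ℕ) : PowerSeries (MvPolynomial (Fin k) ℚ) :=
  PowerSeries.mk fun m => if m = 0 then 0 else psum (Fin k) ℚ m

noncomputable def Dser (k : ℕ) : PowerSeries (MvPolynomial (Fin k) ℚ) :=
  PowerSeries.mk fun m =>
    (-1) ^ (m + 1) * (m : MvPolynomial (Fin k) ℚ) * esymm (Fin k) ℚ m

lemma EH (k : ℕ) : Eser k * Hser k = 1 := by
  refine PowerSeries.ext fun n => ?_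
  rw [PowerSeries.coeff_mul, Finset.Nat.sum_antidiagonal_eq_sum_range_succ_mk,
    PowerSeries.coeff_one]
  cases n with
  | zero => simp [Eser, Hser, h_zero]
  | succ n =>
    rw [Finset.sum_range_succ', if_neg (Nat.succ_ne_zero n)]
    simp only [Eser, Hser, PowerSeries.coeff_mk, Nat.sub_zero, pow_zero, esymm_zero, one_mul]
    have hh : h k (n + 1) = ∑ i ∈ Finset.range (n + 1),
        (-1 : MvPolynomial (Fin k) ℚ) ^ (i + 1 + 1) * esymm (Fin k) ℚ (i + 1) *
          h k (n + 1 - (i + 1)) := by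
      rw [h_rec k (n + 1) (by omega)]
      exact fin_sum_to_range k (n + 1)
        (fun a => (-1) ^ (a + 1 : ℕ) * esymm (Fin k) ℚ a * h k (n + 1 - a))
        (fun a ha => by simp [esymm_gt k a ha])
    rw [hh, ← Finset.sum_add_distrib]
    apply Finset.sum_eq_zero
    intro i _
    ring

lemma PE (k : ℕ) : Pser k * Eser k = Dser k := by
  refine PowerSeries.ext fun n => ?_
  rw [PowerSeries.coeff_mul, Finset.Nat.sum_antidiagonal_eq_sum_range_succ_mk,
    Finset.sum_range_succ']
  simp only [Pser, Eser, Dser, PowerSeries.coeff_mk]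
  rw [if_pos trivial, zero_mul, add_zero]
  have hterm : ∀ x ∈ Finset.range n,
      (if x + 1 = 0 then 0 else psum (Fin k) ℚ (x + 1)) *
          ((-1) ^ (n - (x + 1)) * esymm (Fin k) ℚ (n - (x + 1)))
        = psum (Fin k) ℚ (x + 1) * ((-1) ^ (n - (x + 1)) * esymm (Fin k) ℚ (n - (x + 1))) :=
    fun x _ => by rw [if_neg (Nat.succ_ne_zero x)]
  rw [Finset.sum_congr rfl hterm]
  have NI := MvPolynomial.mul_esymm_eq_sum (Fin k) ℚ n
  have hRHS : (-1 : MvPolynomial (Fin k) ℚ) ^ (n + 1) * (n : MvPolynomial (Fin k) ℚ) *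
      esymm (Fin k) ℚ n
      = ∑ i ∈ Finset.range n, (-1) ^ i * esymm (Fin k) ℚ i * psum (Fin k) ℚ (n - i) := by
    rw [mul_assoc, NI, ← mul_assoc, ← pow_add]
    rw [Even.neg_one_pow ⟨n + 1, by ring⟩, one_mul]
    rw [Finset.sum_filter, Finset.Nat.sum_antidiagonal_eq_sum_range_succ_mk,
      Finset.sum_range_succ, if_neg (lt_irrefl n), add_zero]
    exact Finset.sum_congr rfl fun i hi => if_pos (Finset.mem_range.mp hi)
  rw [hRHS, ← Finset.sum_range_reflect
    (fun i => (-1 : MvPolynomial (Fin k) ℚ) ^ i * esymm (Fin k) ℚ i * psum (Fin k) ℚ (n - i)) n]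
  apply Finset.sum_congr rfl
  intro i hi
  rw [Finset.mem_range] at hi
  have e1 : n - 1 - i = n - (i + 1) := by omega
  rw [e1]
  have e2 : n - (n - (i + 1)) = i + 1 := by omega
  rw [e2]
  ring

lemma DH_coeff (k n : ℕ) (hn : 1 ≤ n) :
    PowerSeries.coeff n (Dser k * Hser k) = φ k (G k n) := by
  rw [PowerSeries.coeff_mul, Finset.Nat.sum_antidiagonal_eq_sum_range_succ_mk,
    Finset.sum_range_succ']
  simp only [Dser, Hser, PowerSeries.coeff_mk, Nat.cast_zero, mul_zero, zero_mul, add_zero]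
  rw [G_image k n hn]
  rw [fin_sum_to_range k n
    (fun a => ((a : ℕ) : MvPolynomial (Fin k) ℚ) *
      ((-1) ^ (a + 1 : ℕ) * esymm (Fin k) ℚ a * h k (n - a)))
    (fun a ha => by simp [esymm_gt k a ha])]
  apply Finset.sum_congr rfl
  intro i _
  push_cast
  ring

end GLP

theorem G_eq_power_sum (k n : ℕ) (hk : 1 ≤ k) (hn : 1 ≤ n) :
    aeval (fun j : Fin k => (-1 : MvPolynomial (Fin k) ℚ) ^ j.1 * esymm (Fin k) ℚ (j.1 + 1))
        (G k n) =
      psum (Fin k) ℚ n := by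
  have hDP : GLP.Dser k * GLP.Hser k = GLP.Pser k := by
    rw [← GLP.PE k, mul_assoc, GLP.EH k, mul_one]
  have hc := GLP.DH_coeff k n hn
  rw [hDP] at hc
  rw [GLP.Pser, PowerSeries.coeff_mk, if_neg (by omega)] at hc
  exact hc.symm
end

section
/- Let k ≥ 1, let ω = (ω₁, ω₂, …) be a sequence of integers, and let n ≥ k+1. Then the weighted isobaric polynomials satisfy the linear recursion P_{ω,k,n} = t₁·P_{ω,k,n−1} + t₂·P_{ω,k,n−2} + ⋯ + t_k·P_{ω,k,n−k} in ℤ[t₁,…,t_k]. -/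
open Finset MvPolynomial

/-- The weighted isobaric polynomial with weight vector `ω` (0-indexed, so
`ω 0 = ω₁`): `P_{ω,k,n} = ∑_{α ⊢ n} (|α|!/(α₁!⋯α_k!))·((∑ᵢ αᵢωᵢ)/|α|)·t^α`.
Its coefficients are integers; it is written here in `ℚ[t₁,…,t_k]`. -/
noncomputable def P (k : ℕ) (ω : ℕ → ℤ) (n : ℕ) : MvPolynomial (Fin k) ℚ :=
  ∑ α ∈ partitions k n,
    C ((Nat.multinomial Finset.univ α : ℚ) *
        ((∑ i : Fin k, (α i : ℚ) * (ω i.1 : ℚ)) / ((∑ i, α i : ℕ) : ℚ))) *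
      ∏ j, X j ^ α j

namespace IsobAux

noncomputable def coef (k : ℕ) (ω : ℕ → ℤ) (α : Fin k → ℕ) : ℚ :=
  (Nat.multinomial Finset.univ α : ℚ) *
    ((∑ i : Fin k, (α i : ℚ) * (ω i.1 : ℚ)) / ((∑ i, α i : ℕ) : ℚ))

lemma mem_partitions {k n : ℕ} {α : Fin k → ℕ} :
    α ∈ partitions k n ↔ ∑ j : Fin k, (j.1 + 1) * α j = n := by
  constructor
  · intro h; exact (Finset.mem_filter.1 h).2
  · intro h
    refine Finset.mem_filter.2 ⟨Fintype.mem_piFinset.2 fun i => Finset.mem_range.2 ?_, h⟩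
    have h1 : (i.1 + 1) * α i ≤ n := by
      rw [← h]
      exact Finset.single_le_sum (f := fun j : Fin k => (j.1 + 1) * α j)
        (fun j _ => Nat.zero_le _) (Finset.mem_univ i)
    have h2 : α i ≤ (i.1 + 1) * α i := Nat.le_mul_of_pos_left _ (Nat.succ_pos _)
    omega

lemma sum_ge_two {k n : ℕ} (hn : k + 1 ≤ n) {α : Fin k → ℕ}
    (hα : ∑ j : Fin k, (j.1 + 1) * α j = n) : 2 ≤ ∑ i, α i := by
  have h1 : n ≤ k * ∑ i, α i := by
    rw [← hα, Finset.mul_sum]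
    refine Finset.sum_le_sum fun i _ => Nat.mul_le_mul_right _ ?_
    exact i.2
  by_contra h
  interval_cases h' : (∑ i, α i) <;> omega

/-- Multinomial recursion in ℚ. -/
lemma multinomial_update {k : ℕ} (α : Fin k → ℕ) (j : Fin k) (hj : 1 ≤ α j) :
    (Nat.multinomial Finset.univ (Function.update α j (α j - 1)) : ℚ) * (∑ i, α i : ℕ) =
      (Nat.multinomial Finset.univ α : ℚ) * α j := by
  classical
  set u := Function.update α j (α j - 1) with hu
  have hsum : ∑ i, u i = (∑ i, α i) - 1 := by
    have h1 : ∑ i, u i = (α j - 1) + ∑ i ∈ Finset.univ.erase j, α i := by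
      rw [hu, Finset.sum_update_of_mem (Finset.mem_univ j)]
      simp [Finset.sdiff_singleton_eq_erase]
    have h2 : ∑ i, α i = α j + ∑ i ∈ Finset.univ.erase j, α i :=
      (Finset.add_sum_erase _ _ (Finset.mem_univ j)).symm
    omega
  have hprodu : ∏ i, (u i).factorial =
      (α j - 1).factorial * ∏ i ∈ Finset.univ.erase j, (α i).factorial := by
    rw [← Finset.mul_prod_erase Finset.univ _ (Finset.mem_univ j)]
    congr 1
    · simp [hu]
    · exact Finset.prod_congr rfl fun i hi =>
        by rw [hu, Function.update_of_ne (Finset.ne_of_mem_erase hi)]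
  have hproda : ∏ i, (α i).factorial =
      (α j).factorial * ∏ i ∈ Finset.univ.erase j, (α i).factorial :=
    (Finset.mul_prod_erase Finset.univ _ (Finset.mem_univ j)).symm
  have spec1 := Nat.multinomial_spec Finset.univ u
  have spec2 := Nat.multinomial_spec Finset.univ α
  set N := ∑ i, α i with hN
  have hN1 : 1 ≤ N := le_trans hj (Finset.single_le_sum (fun i _ => Nat.zero_le _) (Finset.mem_univ j))
  -- N * (N-1)! = N!
  have hfN : N * (N - 1).factorial = N.factorial := Nat.mul_factorial_pred (Nat.one_le_iff_ne_zero.mp hN1)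
  have hfj : α j * (α j - 1).factorial = (α j).factorial := Nat.mul_factorial_pred (Nat.one_le_iff_ne_zero.mp hj)
  -- work in ℕ: multinomial u * N * ∏(α i)! = multinomial α * α j * ∏(α i)!
  have key : Nat.multinomial Finset.univ u * N * ∏ i, (α i).factorial =
      Nat.multinomial Finset.univ α * (α j) * ∏ i, (α i).factorial := by
    calc Nat.multinomial Finset.univ u * N * ∏ i, (α i).factorial
        = N * (α j) * ((∏ i, (u i).factorial) * Nat.multinomial Finset.univ u) := by
          rw [hprodu, hproda, ← hfj]; ring
      _ = N * (α j) * ((∑ i, u i).factorial) := by rw [spec1]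
      _ = (α j) * (N * (N-1).factorial) := by rw [hsum]; ring
      _ = (α j) * ((∏ i, (α i).factorial) * Nat.multinomial Finset.univ α) := by
          rw [hfN, spec2]
      _ = Nat.multinomial Finset.univ α * (α j) * ∏ i, (α i).factorial := by ring
  have hne : (∏ i, (α i).factorial) ≠ 0 :=
    Finset.prod_ne_zero_iff.2 fun i _ => (Nat.factorial_pos _).ne'
  have key2 : Nat.multinomial Finset.univ u * N = Nat.multinomial Finset.univ α * (α j) :=
    Nat.eq_of_mul_eq_mul_right (Nat.pos_of_ne_zero hne) key
  exact_mod_cast congrArg (fun m : ℕ => (m : ℚ)) key2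

/-- The key scalar identity. -/
lemma key_coef {k n : ℕ} (hk : 1 ≤ k) (ω : ℕ → ℤ) {α : Fin k → ℕ}
    (hα : ∑ j : Fin k, (j.1 + 1) * α j = n) (hn : k + 1 ≤ n) :
    ∑ j ∈ Finset.univ.filter (fun j => 1 ≤ α j), coef k ω (Function.update α j (α j - 1)) =
      coef k ω α := by
  classical
  set N := ∑ i, α i with hN
  have hN2 : 2 ≤ N := sum_ge_two hn hα
  set S : ℚ := ∑ i : Fin k, (α i : ℚ) * (ω i.1 : ℚ) with hS
  set M : ℚ := (Nat.multinomial Finset.univ α : ℚ) with hM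
  have hNQ : ((N : ℚ)) ≠ 0 := by positivity
  have hNQ1 : ((N : ℚ) - 1) ≠ 0 := by
    have : (2 : ℚ) ≤ (N : ℚ) := by exact_mod_cast hN2
    linarith
  -- per-term formula
  have hterm : ∀ j ∈ Finset.univ.filter (fun j : Fin k => 1 ≤ α j),
      coef k ω (Function.update α j (α j - 1)) =
        M * (α j : ℚ) * ((S - (ω j.1 : ℚ)) / ((N : ℚ) * ((N : ℚ) - 1))) := by
    intro j hjmem
    have hj : 1 ≤ α j := (Finset.mem_filter.1 hjmem).2
    set u := Function.update α j (α j - 1) with hu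
    have hsum : ∑ i, u i = N - 1 := by
      have h1 : ∑ i, u i = (α j - 1) + ∑ i ∈ Finset.univ.erase j, α i := by
        rw [hu, Finset.sum_update_of_mem (Finset.mem_univ j)]
        simp [Finset.sdiff_singleton_eq_erase]
      have h2 : N = α j + ∑ i ∈ Finset.univ.erase j, α i :=
        (Finset.add_sum_erase _ _ (Finset.mem_univ j)).symm
      omega
    have hsumQ : ((∑ i, u i : ℕ) : ℚ) = (N : ℚ) - 1 := by
      rw [hsum, Nat.cast_sub (show 1 ≤ N by omega), Nat.cast_one]
    have hws : ∑ i : Fin k, (u i : ℚ) * (ω i.1 : ℚ) = S - (ω j.1 : ℚ) := by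
      have h1 : ∑ i : Fin k, (u i : ℚ) * (ω i.1 : ℚ) =
          ((α j - 1 : ℕ) : ℚ) * (ω j.1 : ℚ) +
            ∑ i ∈ Finset.univ.erase j, (α i : ℚ) * (ω i.1 : ℚ) := by
        rw [hu]
        rw [show (fun i : Fin k => ((Function.update α j (α j - 1) i : ℕ) : ℚ) * (ω i.1 : ℚ)) =
          Function.update (fun i : Fin k => (α i : ℚ) * (ω i.1 : ℚ)) j
            (((α j - 1 : ℕ) : ℚ) * (ω j.1 : ℚ)) from ?_]
        · rw [Finset.sum_update_of_mem (Finset.mem_univ j)]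
          simp [Finset.sdiff_singleton_eq_erase]
        · funext i
          by_cases hij : i = j
          · subst hij; simp
          · simp [Function.update_of_ne hij]
      have h2 : S = (α j : ℚ) * (ω j.1 : ℚ) +
          ∑ i ∈ Finset.univ.erase j, (α i : ℚ) * (ω i.1 : ℚ) := by
        rw [hS]; exact (Finset.add_sum_erase _ _ (Finset.mem_univ j)).symm
      have h3 : ((α j - 1 : ℕ) : ℚ) = (α j : ℚ) - 1 := by
        push_cast [Nat.cast_sub hj]; ring
      rw [h1, h3, h2]; ring
    have hmul : (Nat.multinomial Finset.univ u : ℚ) = M * (α j : ℚ) / (N : ℚ) := by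
      have := multinomial_update α j hj
      rw [← hN] at this
      field_simp
      linarith [this]
    rw [coef, hws, hsumQ, hmul]
    field_simp
  rw [Finset.sum_congr rfl hterm]
  -- extend to the whole sum
  have hext : ∑ j ∈ Finset.univ.filter (fun j : Fin k => 1 ≤ α j),
      M * (α j : ℚ) * ((S - (ω j.1 : ℚ)) / ((N : ℚ) * ((N : ℚ) - 1))) =
      ∑ j : Fin k, M * (α j : ℚ) * ((S - (ω j.1 : ℚ)) / ((N : ℚ) * ((N : ℚ) - 1))) := by
    refine Finset.sum_subset (Finset.filter_subset _ _) ?_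
    intro j _ hj
    have : α j = 0 := by
      simp only [Finset.mem_filter, Finset.mem_univ, true_and] at hj; omega
    simp [this]
  rw [hext]
  have hsum2 : ∑ j : Fin k, M * (α j : ℚ) * ((S - (ω j.1 : ℚ)) / ((N : ℚ) * ((N : ℚ) - 1))) =
      (M / ((N : ℚ) * ((N : ℚ) - 1))) * ∑ j : Fin k, (α j : ℚ) * (S - (ω j.1 : ℚ)) := by
    rw [Finset.mul_sum]
    refine Finset.sum_congr rfl fun j _ => by ring
  have hsum3 : ∑ j : Fin k, (α j : ℚ) * (S - (ω j.1 : ℚ)) = ((N : ℚ) - 1) * S := by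
    have h1 : ∑ j : Fin k, (α j : ℚ) * (S - (ω j.1 : ℚ)) =
        (∑ j : Fin k, (α j : ℚ)) * S - ∑ j : Fin k, (α j : ℚ) * (ω j.1 : ℚ) := by
      rw [Finset.sum_mul, ← Finset.sum_sub_distrib]
      refine Finset.sum_congr rfl fun j _ => by ring
    have h2 : (∑ j : Fin k, (α j : ℚ)) = (N : ℚ) := by rw [hN]; push_cast; rfl
    rw [h1, h2, ← hS]; ring
  rw [hsum2, hsum3, coef, ← hM, ← hS, ← hN]
  field_simp

end IsobAux

theorem P_linear_recursion (k : ℕ) (hk : 1 ≤ k) (ω : ℕ → ℤ) (n : ℕ) (hn : k + 1 ≤ n) :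
    P k ω n = ∑ j ∈ Finset.Icc 1 k, tQ k (j - 1) * P k ω (n - j) := by
  classical
  open IsobAux in
  -- Step 1: reindex the RHS over Fin k
  have hstep1 : ∑ j ∈ Finset.Icc 1 k, tQ k (j - 1) * P k ω (n - j) =
      ∑ j : Fin k, X j * P k ω (n - (j.1 + 1)) := by
    rw [show Finset.Icc 1 k = Finset.Ico 1 (k + 1) by rw [Finset.Ico_add_one_right_eq_Icc],
      Finset.sum_Ico_eq_sum_range]
    rw [show k + 1 - 1 = k from rfl]
    rw [← Fin.sum_univ_eq_sum_range (fun i => tQ k (1 + i - 1) * P k ω (n - (1 + i))) k]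
    refine Finset.sum_congr rfl fun j _ => ?_
    have h1 : 1 + j.1 - 1 = j.1 := by omega
    rw [h1, tQ, dif_pos j.2]
    congr 2
    omega
  rw [hstep1]
  -- Step 2: expand P, push X inside
  have hstep2 : ∀ j : Fin k, X j * P k ω (n - (j.1 + 1)) =
      ∑ β ∈ partitions k (n - (j.1 + 1)),
        C (IsobAux.coef k ω β) * ∏ i, X i ^ (Function.update β j (β j + 1) i) := by
    intro j
    rw [P, Finset.mul_sum]
    refine Finset.sum_congr rfl fun β _ => ?_
    have hprod : (∏ i, (X i : MvPolynomial (Fin k) ℚ) ^ (Function.update β j (β j + 1) i)) =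
        X j * ∏ i, X i ^ β i := by
      rw [← Finset.mul_prod_erase Finset.univ
        (fun i => (X i : MvPolynomial (Fin k) ℚ) ^ (Function.update β j (β j + 1) i))
        (Finset.mem_univ j)]
      rw [← Finset.mul_prod_erase Finset.univ
        (fun i => (X i : MvPolynomial (Fin k) ℚ) ^ β i) (Finset.mem_univ j)]
      rw [Function.update_self, pow_succ]
      rw [Finset.prod_congr rfl fun i hi =>
        by rw [Function.update_of_ne (Finset.ne_of_mem_erase hi)]]
      ring
    rw [hprod, IsobAux.coef]
    ring
  rw [Finset.sum_congr rfl fun j _ => hstep2 j]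
  -- Step 3: rewrite LHS using the key identity and a bijection
  have hstep3 : P k ω n = ∑ α ∈ partitions k n,
      ∑ j ∈ Finset.univ.filter (fun j : Fin k => 1 ≤ α j),
        C (IsobAux.coef k ω (Function.update α j (α j - 1))) * ∏ i, X i ^ α i := by
    rw [P]
    refine Finset.sum_congr rfl fun α hα => ?_
    rw [← Finset.sum_mul, ← map_sum C,
      IsobAux.key_coef hk ω (IsobAux.mem_partitions.1 hα) hn, IsobAux.coef]
  rw [hstep3]
  -- Step 4: the bijection between pairs
  rw [Finset.sum_sigma' (partitions k n)
    (fun α => Finset.univ.filter (fun j : Fin k => 1 ≤ α j))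
    (fun α j => C (IsobAux.coef k ω (Function.update α j (α j - 1))) * ∏ i, X i ^ α i)]
  rw [Finset.sum_sigma' (Finset.univ : Finset (Fin k))
    (fun j => partitions k (n - (j.1 + 1)))
    (fun j β => C (IsobAux.coef k ω β) * ∏ i, X i ^ (Function.update β j (β j + 1) i))]
  refine Finset.sum_nbij'
    (fun p => ⟨p.2, Function.update p.1 p.2 (p.1 p.2 - 1)⟩)
    (fun p => ⟨Function.update p.2 p.1 (p.2 p.1 + 1), p.1⟩)
    ?_ ?_ ?_ ?_ ?_
  · rintro ⟨α, j⟩ hp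
    dsimp only
    simp only [Finset.mem_sigma, Finset.mem_filter, Finset.mem_univ, true_and] at hp
    obtain ⟨hα, hj⟩ := hp
    refine Finset.mem_sigma.2 ⟨Finset.mem_univ _, IsobAux.mem_partitions.2 ?_⟩
    show ∑ i : Fin k, (i.1 + 1) * Function.update α j (α j - 1) i = n - (j.1 + 1)
    have hαs := IsobAux.mem_partitions.1 hα
    have h1 : ∑ i : Fin k, (i.1 + 1) * Function.update α j (α j - 1) i =
        (j.1 + 1) * (α j - 1) + ∑ i ∈ Finset.univ.erase j, (i.1 + 1) * α i := by
      rw [show (fun i : Fin k => (i.1 + 1) * Function.update α j (α j - 1) i) =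
        Function.update (fun i : Fin k => (i.1 + 1) * α i) j ((j.1 + 1) * (α j - 1)) from ?_]
      · rw [Finset.sum_update_of_mem (Finset.mem_univ j)]
        simp [Finset.sdiff_singleton_eq_erase]
      · funext i
        by_cases hij : i = j
        · subst hij; simp
        · simp [Function.update_of_ne hij]
    have h2 : n = (j.1 + 1) * α j + ∑ i ∈ Finset.univ.erase j, (i.1 + 1) * α i := by
      rw [← hαs]; exact (Finset.add_sum_erase _ _ (Finset.mem_univ j)).symm
    have h3 : (j.1 + 1) * α j = (j.1 + 1) * (α j - 1) + (j.1 + 1) := by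
      obtain ⟨m, hm⟩ := Nat.exists_eq_add_of_le hj
      rw [hm, Nat.add_sub_cancel_left]
      ring
    omega
  · rintro ⟨j, β⟩ hp
    dsimp only
    simp only [Finset.mem_sigma, Finset.mem_univ, true_and] at hp
    have hβs := IsobAux.mem_partitions.1 hp
    refine Finset.mem_sigma.2 ⟨IsobAux.mem_partitions.2 ?_, ?_⟩
    · show ∑ i : Fin k, (i.1 + 1) * Function.update β j (β j + 1) i = n
      have h1 : ∑ i : Fin k, (i.1 + 1) * Function.update β j (β j + 1) i =
          (j.1 + 1) * (β j + 1) + ∑ i ∈ Finset.univ.erase j, (i.1 + 1) * β i := by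
        rw [show (fun i : Fin k => (i.1 + 1) * Function.update β j (β j + 1) i) =
          Function.update (fun i : Fin k => (i.1 + 1) * β i) j ((j.1 + 1) * (β j + 1)) from ?_]
        · rw [Finset.sum_update_of_mem (Finset.mem_univ j)]
          simp [Finset.sdiff_singleton_eq_erase]
        · funext i
          by_cases hij : i = j
          · subst hij; simp
          · simp [Function.update_of_ne hij]
      have h2 : n - (j.1 + 1) = (j.1 + 1) * β j + ∑ i ∈ Finset.univ.erase j, (i.1 + 1) * β i := by
        rw [← hβs]; exact (Finset.add_sum_erase _ _ (Finset.mem_univ j)).symm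
      have hjn : j.1 + 1 ≤ n := le_trans (by omega : j.1 + 1 ≤ k + 1) hn
      have h3 : (j.1 + 1) * (β j + 1) = (j.1 + 1) * β j + (j.1 + 1) := by ring
      omega
    · simp only [Finset.mem_filter, Finset.mem_univ, true_and, Function.update_self]
      omega
  · rintro ⟨α, j⟩ hp
    simp only [Finset.mem_sigma, Finset.mem_filter, Finset.mem_univ, true_and] at hp
    obtain ⟨_, hj⟩ := hp
    have : Function.update (Function.update α j (α j - 1)) j
        (Function.update α j (α j - 1) j + 1) = α := by
      funext i
      by_cases hij : i = j
      · subst hij; simp; omega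
      · simp [Function.update_of_ne hij]
    dsimp only
    rw [this]
  · rintro ⟨j, β⟩ hp
    have : Function.update (Function.update β j (β j + 1)) j
        (Function.update β j (β j + 1) j - 1) = β := by
      funext i
      by_cases hij : i = j
      · subst hij; simp
      · simp [Function.update_of_ne hij]
    dsimp only
    rw [this]
  · rintro ⟨α, j⟩ hp
    simp only [Finset.mem_sigma, Finset.mem_filter, Finset.mem_univ, true_and] at hp
    obtain ⟨_, hj⟩ := hp
    have hupd : Function.update (Function.update α j (α j - 1)) j
        (Function.update α j (α j - 1) j + 1) = α := by
      funext i
      by_cases hij : i = j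
      · subst hij; simp; omega
      · simp [Function.update_of_ne hij]
    dsimp only
    rw [hupd]
end
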